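/- Let K be a field, V, W vector spaces over K, and R ⊆ V ⊗ V, S ⊆ W ⊗ W subspaces. Let Φ : TensorAlgebra K (V × W) → (TensorAlgebra K V / (R)) ⊗[K] (TensorAlgebra K W / (S)) be the K-algebra homomorphism determined by Φ(ι(v,w)) = (class of ι v) ⊗ 1 + 1 ⊗ (class of ι w). Then Φ is surjective, and its kernel equals the two-sided ideal of TensorAlgebra K (V × W) generated by: (i) the image of R under v⊗v' ↦ ι(v,0)·ι(v',0), (ii) the image of S under w⊗w' ↦ ι(0,w)·ι(0,w'), and (iii) the commutators ι(v,0)·ι(0,w) − ι(0,w)·ι(v,0) for v ∈ V, w ∈ W. -/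

import Mathlib

open TensorProduct

set_option synthInstance.maxHeartbeats 1000000
set_option maxHeartbeats 1600000

/-- The linear map `V ⊗ V → T(V)` sending `v ⊗ w` to `ι v * ι w`. -/
noncomputable def quadMap (K V : Type*) [Field K] [AddCommGroup V] [Module K V] :
    V ⊗[K] V →ₗ[K] TensorAlgebra K V :=
  TensorProduct.lift
    ((LinearMap.mul K (TensorAlgebra K V) ∘ₗ TensorAlgebra.ι K).compl₂ (TensorAlgebra.ι K))

/-- The relation whose `RingQuot` is the quadratic algebra `T(V)/(R)`, i.e. the quotient of
the tensor algebra by the two-sided ideal generated by the image of `R ⊆ V ⊗ V` under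
`v ⊗ w ↦ ι v * ι w`. -/
def quadRel {K V : Type*} [Field K] [AddCommGroup V] [Module K V]
    (R : Submodule K (V ⊗[K] V)) (x y : TensorAlgebra K V) : Prop :=
  ∃ r ∈ R, x = quadMap K V r ∧ y = 0

/-- The quadratic algebra `T(V)/(R)`. -/
abbrev QuadraticAlgebra' {K V : Type*} [Field K] [AddCommGroup V] [Module K V]
    (R : Submodule K (V ⊗[K] V)) : Type _ :=
  RingQuot (quadRel R)

variable {K V W : Type*} [Field K] [AddCommGroup V] [Module K V] [AddCommGroup W] [Module K W]

/-- The algebra homomorphism `T(V × W) → (TV/(R)) ⊗ (TW/(S))` determined by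
`ι (v, w) ↦ (class of ι v) ⊗ 1 + 1 ⊗ (class of ι w)`. -/
noncomputable def prodToTensorOfQuotients (R : Submodule K (V ⊗[K] V))
    (S : Submodule K (W ⊗[K] W)) :
    TensorAlgebra K (V × W) →ₐ[K] QuadraticAlgebra' R ⊗[K] QuadraticAlgebra' S :=
  TensorAlgebra.lift K
    ((Algebra.TensorProduct.includeLeft :
        QuadraticAlgebra' R →ₐ[K] QuadraticAlgebra' R ⊗[K] QuadraticAlgebra' S).toLinearMap
          ∘ₗ (RingQuot.mkAlgHom K (quadRel R)).toLinearMap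
          ∘ₗ TensorAlgebra.ι K ∘ₗ LinearMap.fst K V W
      + (Algebra.TensorProduct.includeRight :
          QuadraticAlgebra' S →ₐ[K] QuadraticAlgebra' R ⊗[K] QuadraticAlgebra' S).toLinearMap
            ∘ₗ (RingQuot.mkAlgHom K (quadRel S)).toLinearMap
            ∘ₗ TensorAlgebra.ι K ∘ₗ LinearMap.snd K V W)

namespace ProdQuotAux

variable (R : Submodule K (V ⊗[K] V)) (S : Submodule K (W ⊗[K] W))

/-- The generating set of the kernel ideal. -/
noncomputable def gens : Set (TensorAlgebra K (V × W)) :=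
  (quadMap K (V × W) ∘ₗ
      TensorProduct.map (LinearMap.inl K V W) (LinearMap.inl K V W)) '' (R : Set _)
    ∪ (quadMap K (V × W) ∘ₗ
        TensorProduct.map (LinearMap.inr K V W) (LinearMap.inr K V W)) '' (S : Set _)
    ∪ {x : TensorAlgebra K (V × W) | ∃ (v : V) (w : W),
        x = TensorAlgebra.ι K ((v, 0) : V × W) * TensorAlgebra.ι K ((0, w) : V × W)
          - TensorAlgebra.ι K ((0, w) : V × W) * TensorAlgebra.ι K ((v, 0) : V × W)}

/-- The quotient ring `T(V × W)/I`. -/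
abbrev QT : Type _ := (TwoSidedIdeal.span (gens R S)).ringCon.Quotient

noncomputable instance : Algebra K (QT R S) :=
  inferInstance

/-- The quotient projection as an algebra hom. -/
noncomputable def pr : TensorAlgebra K (V × W) →ₐ[K] QT R S :=
  { RingCon.mk' (TwoSidedIdeal.span (gens R S)).ringCon with
    commutes' := fun _ => rfl }

lemma pr_eq_zero_iff (x : TensorAlgebra K (V × W)) :
    pr R S x = 0 ↔ x ∈ TwoSidedIdeal.span (gens R S) := by
  rw [TwoSidedIdeal.mem_iff]
  exact RingCon.eq _

/-- Inclusion `T V → T (V × W)`. -/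
noncomputable def inlA : TensorAlgebra K V →ₐ[K] TensorAlgebra K (V × W) :=
  TensorAlgebra.lift K (TensorAlgebra.ι K ∘ₗ LinearMap.inl K V W)

/-- Inclusion `T W → T (V × W)`. -/
noncomputable def inrA : TensorAlgebra K W →ₐ[K] TensorAlgebra K (V × W) :=
  TensorAlgebra.lift K (TensorAlgebra.ι K ∘ₗ LinearMap.inr K V W)

lemma map_inl_quadMap (r : V ⊗[K] V) :
    quadMap K (V × W) (TensorProduct.map (LinearMap.inl K V W) (LinearMap.inl K V W) r)
      = inlA (quadMap K V r) := by
  have h : quadMap K (V × W) ∘ₗ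
      TensorProduct.map (LinearMap.inl K V W) (LinearMap.inl K V W)
        = (inlA (K := K) (V := V) (W := W)).toLinearMap ∘ₗ quadMap K V := by
    ext v v'
    simp [quadMap, inlA, TensorAlgebra.lift_ι_apply]
  exact LinearMap.congr_fun h r

lemma map_inr_quadMap (s : W ⊗[K] W) :
    quadMap K (V × W) (TensorProduct.map (LinearMap.inr K V W) (LinearMap.inr K V W) s)
      = inrA (quadMap K W s) := by
  have h : quadMap K (V × W) ∘ₗ
      TensorProduct.map (LinearMap.inr K V W) (LinearMap.inr K V W)
        = (inrA (K := K) (V := V) (W := W)).toLinearMap ∘ₗ quadMap K W := by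
    ext w w'
    simp [quadMap, inrA, TensorAlgebra.lift_ι_apply]
  exact LinearMap.congr_fun h s

lemma Phi_ι (v : V) (w : W) :
    prodToTensorOfQuotients R S (TensorAlgebra.ι K ((v, w) : V × W))
      = (RingQuot.mkAlgHom K (quadRel R) (TensorAlgebra.ι K v)) ⊗ₜ[K] 1
        + 1 ⊗ₜ[K] (RingQuot.mkAlgHom K (quadRel S) (TensorAlgebra.ι K w)) := by
  rw [prodToTensorOfQuotients, TensorAlgebra.lift_ι_apply]
  simp

lemma Phi_comp_inlA :
    (prodToTensorOfQuotients R S).comp inlA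
      = (Algebra.TensorProduct.includeLeft (S := K)).comp (RingQuot.mkAlgHom K (quadRel R)) := by
  apply TensorAlgebra.hom_ext
  apply LinearMap.ext; intro v
  simp [inlA, Phi_ι, TensorAlgebra.lift_ι_apply]

lemma Phi_comp_inrA :
    (prodToTensorOfQuotients R S).comp inrA
      = (Algebra.TensorProduct.includeRight).comp (RingQuot.mkAlgHom K (quadRel S)) := by
  apply TensorAlgebra.hom_ext
  apply LinearMap.ext; intro w
  simp [inrA, Phi_ι, TensorAlgebra.lift_ι_apply]

lemma mk_quadMap_R {r : V ⊗[K] V} (hr : r ∈ R) :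
    RingQuot.mkAlgHom K (quadRel R) (quadMap K V r) = 0 := by
  have := RingQuot.mkAlgHom_rel (S := K) (s := quadRel R) (⟨r, hr, rfl, rfl⟩ : quadRel R (quadMap K V r) 0)
  rwa [map_zero] at this

lemma mk_quadMap_S {s : W ⊗[K] W} (hs : s ∈ S) :
    RingQuot.mkAlgHom K (quadRel S) (quadMap K W s) = 0 := by
  have := RingQuot.mkAlgHom_rel (S := K) (s := quadRel S) (⟨s, hs, rfl, rfl⟩ : quadRel S (quadMap K W s) 0)
  rwa [map_zero] at this

/-- `f : T V → QT`. -/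
noncomputable def fT : TensorAlgebra K V →ₐ[K] QT R S := (pr R S).comp inlA

/-- `g : T W → QT`. -/
noncomputable def gT : TensorAlgebra K W →ₐ[K] QT R S := (pr R S).comp inrA

lemma fT_rel : ∀ ⦃x y : TensorAlgebra K V⦄, quadRel R x y → fT R S x = fT R S y := by
  rintro x y ⟨r, hr, rfl, rfl⟩
  show pr R S (inlA (quadMap K V r)) = pr R S (inlA 0)
  rw [map_zero, map_zero, ← map_inl_quadMap, (pr_eq_zero_iff R S _).mpr]
  exact TwoSidedIdeal.subset_span (Or.inl (Or.inl ⟨r, hr, rfl⟩))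

lemma gT_rel : ∀ ⦃x y : TensorAlgebra K W⦄, quadRel S x y → gT R S x = gT R S y := by
  rintro x y ⟨s, hs, rfl, rfl⟩
  show pr R S (inrA (quadMap K W s)) = pr R S (inrA 0)
  rw [map_zero, map_zero, ← map_inr_quadMap, (pr_eq_zero_iff R S _).mpr]
  exact TwoSidedIdeal.subset_span (Or.inl (Or.inr ⟨s, hs, rfl⟩))

/-- descended `f : TV/(R) → QT`. -/
noncomputable def fQ : QuadraticAlgebra' R →ₐ[K] QT R S :=
  RingQuot.liftAlgHom K ⟨fT R S, fT_rel R S⟩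

/-- descended `g : TW/(S) → QT`. -/
noncomputable def gQ : QuadraticAlgebra' S →ₐ[K] QT R S :=
  RingQuot.liftAlgHom K ⟨gT R S, gT_rel R S⟩

lemma comm_vw (v : V) (w : W) :
    Commute (pr R S (TensorAlgebra.ι K ((v, 0) : V × W)))
      (pr R S (TensorAlgebra.ι K ((0, w) : V × W))) := by
  have h : pr R S (TensorAlgebra.ι K ((v, 0) : V × W) * TensorAlgebra.ι K ((0, w) : V × W)
      - TensorAlgebra.ι K ((0, w) : V × W) * TensorAlgebra.ι K ((v, 0) : V × W)) = 0 :=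
    (pr_eq_zero_iff R S _).mpr (TwoSidedIdeal.subset_span (Or.inr ⟨v, w, rfl⟩))
  rw [map_sub, map_mul, map_mul, sub_eq_zero] at h
  exact h

lemma fT_ι (v : V) : fT R S (TensorAlgebra.ι K v) = pr R S (TensorAlgebra.ι K ((v, 0) : V × W)) := by
  simp [fT, inlA, TensorAlgebra.lift_ι_apply]

lemma gT_ι (w : W) : gT R S (TensorAlgebra.ι K w) = pr R S (TensorAlgebra.ι K ((0, w) : V × W)) := by
  simp [gT, inrA, TensorAlgebra.lift_ι_apply]

lemma comm_fT_gT (x : TensorAlgebra K V) (y : TensorAlgebra K W) :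
    Commute (fT R S x) (gT R S y) := by
  induction x using TensorAlgebra.induction with
  | algebraMap r => rw [AlgHom.commutes]; exact Algebra.commute_algebraMap_left r _
  | mul a b ha hb => rw [map_mul]; exact ha.mul_left hb
  | add a b ha hb => rw [map_add]; exact ha.add_left hb
  | ι v =>
    induction y using TensorAlgebra.induction with
    | algebraMap s => rw [AlgHom.commutes]; exact Algebra.commute_algebraMap_right s _
    | mul a b ha hb => rw [map_mul]; exact ha.mul_right hb
    | add a b ha hb => rw [map_add]; exact ha.add_right hb
    | ι w => rw [fT_ι, gT_ι]; exact comm_vw R S v w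

lemma comm_fQ_gQ (a : QuadraticAlgebra' R) (b : QuadraticAlgebra' S) :
    Commute (fQ R S a) (gQ R S b) := by
  obtain ⟨x, rfl⟩ := RingQuot.mkAlgHom_surjective K _ a
  obtain ⟨y, rfl⟩ := RingQuot.mkAlgHom_surjective K _ b
  rw [fQ, gQ, RingQuot.liftAlgHom_mkAlgHom_apply, RingQuot.liftAlgHom_mkAlgHom_apply]
  exact comm_fT_gT R S x y

/-- The inverse-ish map `Ψ`. -/
noncomputable def psi : QuadraticAlgebra' R ⊗[K] QuadraticAlgebra' S →ₐ[K] QT R S :=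
  Algebra.TensorProduct.lift (fQ R S) (gQ R S) (comm_fQ_gQ R S)

lemma psi_comp_Phi : (psi R S).comp (prodToTensorOfQuotients R S) = pr R S := by
  apply TensorAlgebra.hom_ext
  apply LinearMap.ext; rintro ⟨v, w⟩
  have h : (TensorAlgebra.ι K ((v, w) : V × W))
      = TensorAlgebra.ι K ((v, 0) : V × W) + TensorAlgebra.ι K ((0, w) : V × W) := by
    rw [← map_add]
    congr 1
    simp
  simp only [AlgHom.toLinearMap_apply, LinearMap.coe_comp, Function.comp_apply, AlgHom.coe_comp]
  rw [Phi_ι, map_add]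
  have h1 : psi R S ((RingQuot.mkAlgHom K (quadRel R) (TensorAlgebra.ι K v)) ⊗ₜ[K] 1)
      = pr R S (TensorAlgebra.ι K ((v, 0) : V × W)) := by
    rw [psi, Algebra.TensorProduct.lift_tmul, map_one, mul_one, fQ,
      RingQuot.liftAlgHom_mkAlgHom_apply, fT_ι]
  have h2 : psi R S (1 ⊗ₜ[K] (RingQuot.mkAlgHom K (quadRel S) (TensorAlgebra.ι K w)))
      = pr R S (TensorAlgebra.ι K ((0, w) : V × W)) := by
    rw [psi, Algebra.TensorProduct.lift_tmul, map_one, one_mul, gQ,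
      RingQuot.liftAlgHom_mkAlgHom_apply, gT_ι]
  rw [h1, h2, ← map_add, ← h]

lemma gens_subset_ker :
    gens R S ⊆ (TwoSidedIdeal.ker (prodToTensorOfQuotients R S) : Set (TensorAlgebra K (V × W))) := by
  rintro x ((⟨r, hr, rfl⟩ | ⟨s, hs, rfl⟩) | ⟨v, w, rfl⟩) <;>
    rw [SetLike.mem_coe, TwoSidedIdeal.mem_ker]
  · rw [LinearMap.comp_apply, map_inl_quadMap,
      ← AlgHom.comp_apply, Phi_comp_inlA, AlgHom.comp_apply, mk_quadMap_R R hr, map_zero]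
  · rw [LinearMap.comp_apply, map_inr_quadMap,
      ← AlgHom.comp_apply, Phi_comp_inrA, AlgHom.comp_apply, mk_quadMap_S S hs, map_zero]
  · have hv : prodToTensorOfQuotients R S (TensorAlgebra.ι K ((v, 0) : V × W))
        = (RingQuot.mkAlgHom K (quadRel R) (TensorAlgebra.ι K v)) ⊗ₜ[K] 1 := by
      rw [Phi_ι]; simp
    have hw : prodToTensorOfQuotients R S (TensorAlgebra.ι K ((0, w) : V × W))
        = 1 ⊗ₜ[K] (RingQuot.mkAlgHom K (quadRel S) (TensorAlgebra.ι K w)) := by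
      rw [Phi_ι]; simp
    rw [map_sub, map_mul, map_mul, hv, hw, Algebra.TensorProduct.tmul_mul_tmul,
      Algebra.TensorProduct.tmul_mul_tmul, one_mul, mul_one, one_mul, mul_one, sub_self]

end ProdQuotAux

open ProdQuotAux in
/-- `Φ : T(V × W) → (TV/(R)) ⊗ (TW/(S))` is surjective, with kernel the
two-sided ideal generated by the images of `R` and `S` and the commutators
`ι(v,0) * ι(0,w) - ι(0,w) * ι(v,0)`. -/
theorem prodToTensorOfQuotients_surjective_ker (R : Submodule K (V ⊗[K] V))
    (S : Submodule K (W ⊗[K] W)) :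
    Function.Surjective (prodToTensorOfQuotients R S)
      ∧ TwoSidedIdeal.ker (prodToTensorOfQuotients R S)
        = TwoSidedIdeal.span
            ((quadMap K (V × W) ∘ₗ
                TensorProduct.map (LinearMap.inl K V W) (LinearMap.inl K V W)) '' (R : Set _)
              ∪ (quadMap K (V × W) ∘ₗ
                  TensorProduct.map (LinearMap.inr K V W) (LinearMap.inr K V W)) '' (S : Set _)
              ∪ {x : TensorAlgebra K (V × W) | ∃ (v : V) (w : W),
                  x = TensorAlgebra.ι K ((v, 0) : V × W) * TensorAlgebra.ι K ((0, w) : V × W)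
                    - TensorAlgebra.ι K ((0, w) : V × W)
                      * TensorAlgebra.ι K ((v, 0) : V × W)}) := by
  constructor
  · intro z
    induction z using TensorProduct.induction_on with
    | zero => exact ⟨0, map_zero _⟩
    | tmul a b =>
      obtain ⟨x, rfl⟩ := RingQuot.mkAlgHom_surjective K _ a
      obtain ⟨y, rfl⟩ := RingQuot.mkAlgHom_surjective K _ b
      refine ⟨inlA x * inrA y, ?_⟩
      rw [map_mul, ← AlgHom.comp_apply, Phi_comp_inlA, ← AlgHom.comp_apply, Phi_comp_inrA]
      simp only [AlgHom.comp_apply, Algebra.TensorProduct.includeLeft_apply,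
        Algebra.TensorProduct.includeRight_apply, Algebra.TensorProduct.tmul_mul_tmul,
        one_mul, mul_one]
    | add a b ha hb =>
      obtain ⟨x, hx⟩ := ha
      obtain ⟨y, hy⟩ := hb
      exact ⟨x + y, by rw [map_add, hx, hy]⟩
  · have hEq : TwoSidedIdeal.span (gens R S)
        = TwoSidedIdeal.span
            ((quadMap K (V × W) ∘ₗ
                TensorProduct.map (LinearMap.inl K V W) (LinearMap.inl K V W)) '' (R : Set _)
              ∪ (quadMap K (V × W) ∘ₗ
                  TensorProduct.map (LinearMap.inr K V W) (LinearMap.inr K V W)) '' (S : Set _)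
              ∪ {x : TensorAlgebra K (V × W) | ∃ (v : V) (w : W),
                  x = TensorAlgebra.ι K ((v, 0) : V × W) * TensorAlgebra.ι K ((0, w) : V × W)
                    - TensorAlgebra.ι K ((0, w) : V × W)
                      * TensorAlgebra.ι K ((v, 0) : V × W)}) := rfl
    rw [← hEq]
    apply SetLike.ext
    intro x
    constructor
    · intro hx
      rw [TwoSidedIdeal.mem_ker] at hx
      have : pr R S x = 0 := by
        have h := AlgHom.congr_fun (psi_comp_Phi R S) x
        rw [AlgHom.comp_apply, hx, map_zero] at h
        exact h.symm
      exact (pr_eq_zero_iff R S x).mp this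
    · intro hx
      exact TwoSidedIdeal.mem_span_iff.mp hx _ (gens_subset_ker R S)
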